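/- Let f3 be the binary morphism with f3(0)=0 and f3(1)=001011, let t be the Thue–Morse word, and let w3 = f3(t). If u is a factor of w3 ending in 11, then there is a unique word v of the form f3(s) for a factor s of t such that u is a suffix of v and u is not a suffix of any proper suffix of v of the form f3(s') (uniqueness of left completions). -/

import Mathlib

def IsFactor {α : Type*} (u : List α) (w : ℕ → α) : Prop :=
  ∃ i, u = (List.range u.length).map fun j => w (i + j)

def tm : ℕ → Fin 2 := fun n => if (Nat.digits 2 n).sum % 2 = 0 then 0 else 1

def tmPrefix (n : ℕ) : List (Fin 2) := (List.range n).map tm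

/-- The morphism `f3(0) = 0`, `f3(1) = 001011`. -/
def f3 : Fin 2 → List (Fin 2) := fun a => if a = 0 then [0] else [0, 0, 1, 0, 1, 1]

/-- `v` is a left completion of `u`: `v = f3(s)` for a factor `s` of `t`, `u` is a
suffix of `v`, and `u` is not a suffix of any proper suffix of `v` that is an
`f3`-image of a word. -/
def LeftCompletion (u v : List (Fin 2)) : Prop :=
  (∃ s : List (Fin 2), IsFactor s tm ∧ v = s.flatMap f3) ∧ u <:+ v ∧
    ∀ v' : List (Fin 2), v' <:+ v → v' ≠ v →
      (∃ s' : List (Fin 2), v' = s'.flatMap f3) → ¬ u <:+ v'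

/- ### auxiliary lemmas -/

lemma f3_zero : f3 0 = [0] := rfl
lemma f3_one : f3 1 = [0, 0, 1, 0, 1, 1] := rfl

lemma bind_nil : ([] : List (Fin 2)).flatMap f3 = [] := rfl
lemma bind_cons (a : Fin 2) (s : List (Fin 2)) : (a :: s).flatMap f3 = f3 a ++ s.flatMap f3 := rfl

lemma bind_concat (s : List (Fin 2)) (a : Fin 2) :
    (s ++ [a]).flatMap f3 = s.flatMap f3 ++ f3 a := by
  induction s with
  | nil => simp [bind_cons, bind_nil]
  | cons b s ih => simp only [List.cons_append, bind_cons, ih, List.append_assoc]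

lemma suffix_append_right {α : Type*} {x y : List α} (c : List α) (h : x <:+ y) :
    x ++ c <:+ y ++ c := by
  obtain ⟨t, rfl⟩ := h; exact ⟨t, by simp [List.append_assoc]⟩

lemma suffix_append_cancel {α : Type*} {x y c : List α} (h : x ++ c <:+ y ++ c) : x <:+ y := by
  obtain ⟨t, ht⟩ := h
  rw [← List.append_assoc] at ht
  exact ⟨t, List.append_cancel_right ht⟩

lemma last_eq_of_suffix {α : Type*} {x y : List α} {c d : α}
    (h : x ++ [c] <:+ y ++ [d]) : c = d := by
  obtain ⟨t, ht⟩ := h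
  rw [← List.append_assoc] at ht
  have := (List.append_inj' ht rfl).2
  simpa using this
lemma fin2 : ∀ a : Fin 2, a = 0 ∨ a = 1 := by decide

/-- Unique decoding from the right: any suffix of an `f3`-image that is itself an
`f3`-image is obtained by dropping letters. -/
lemma suffix_image : ∀ (s s' : List (Fin 2)), s'.flatMap f3 <:+ s.flatMap f3 →
    ∃ k, s'.flatMap f3 = (s.drop k).flatMap f3 := by
  intro s
  induction s using List.reverseRecOn with
  | nil =>
    intro s' h
    refine ⟨0, ?_⟩
    have : s'.flatMap f3 = [] := List.suffix_nil.mp (by simpa [bind_nil] using h)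
    simp [this, bind_nil]
  | append_singleton s₀ a ih =>
    intro s' h
    rcases List.eq_nil_or_concat s' with rfl | ⟨s₁, b, rfl⟩
    · exact ⟨(s₀ ++ [a]).length, by simp [bind_nil]⟩
    · rw [List.concat_eq_append, bind_concat] at h ⊢
      rw [bind_concat] at h
      have hba : b = a := by
        rcases fin2 a with rfl | rfl <;> rcases fin2 b with rfl | rfl
        · rfl
        · rw [f3_zero, f3_one] at h
          have h' : ((s₁.flatMap f3 ++ [0, 0, 1, 0, 1]) ++ [(1 : Fin 2)]) <:+
              s₀.flatMap f3 ++ [(0 : Fin 2)] := by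
            simpa [List.append_assoc] using h
          exact absurd (last_eq_of_suffix h') (by decide)
        · rw [f3_zero, f3_one] at h
          have h' : (s₁.flatMap f3 ++ [(0 : Fin 2)]) <:+
              ((s₀.flatMap f3 ++ [0, 0, 1, 0, 1]) ++ [(1 : Fin 2)]) := by
            simpa [List.append_assoc] using h
          exact absurd (last_eq_of_suffix h') (by decide)
        · rfl
      subst hba
      have hXY : s₁.flatMap f3 <:+ s₀.flatMap f3 := suffix_append_cancel h
      obtain ⟨k, hk⟩ := ih s₁ hXY
      rcases le_or_gt k s₀.length with hle | hlt
      · refine ⟨k, ?_⟩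
        rw [List.drop_append_of_le_length hle, bind_concat, hk]
      · refine ⟨s₀.length, ?_⟩
        rw [List.drop_eq_nil_of_le (le_of_lt hlt), bind_nil] at hk
        rw [List.drop_append_of_le_length le_rfl, List.drop_length, bind_concat, hk, bind_nil]

/-- `MinSuf u v`: `v` is an `f3`-image having `u` as a suffix, minimal in the sense
that no proper suffix of `v` which is an `f3`-image has `u` as a suffix. -/
def MinSuf (u v : List (Fin 2)) : Prop :=
  (∃ s : List (Fin 2), v = s.flatMap f3) ∧ u <:+ v ∧
    ∀ v' : List (Fin 2), v' <:+ v → v' ≠ v →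
      (∃ s' : List (Fin 2), v' = s'.flatMap f3) → ¬ u <:+ v'

lemma lc_minsuf {u v : List (Fin 2)} (h : LeftCompletion u v) : MinSuf u v :=
  ⟨h.1.imp fun _ hs => hs.2, h.2.1, h.2.2⟩

lemma minsuf_nil {v : List (Fin 2)} (h : MinSuf [] v) : v = [] := by
  by_contra hne
  exact h.2.2 [] List.nil_suffix (fun hh => hne hh.symm) ⟨[], rfl⟩ List.nil_suffix

lemma minsuf_last {u₃ v : List (Fin 2)} {c : Fin 2} (h : MinSuf (u₃ ++ [c]) v) :
    ∃ s₀ : List (Fin 2), v = s₀.flatMap f3 ++ f3 c := by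
  obtain ⟨⟨s, rfl⟩, hsuf, _⟩ := h
  rcases List.eq_nil_or_concat s with rfl | ⟨s₀, a, rfl⟩
  · rw [bind_nil] at hsuf
    have : u₃ ++ [c] = [] := List.suffix_nil.mp hsuf
    simp at this
  · rw [List.concat_eq_append, bind_concat] at hsuf ⊢
    have hac : a = c := by
      rcases fin2 a with rfl | rfl <;> rcases fin2 c with rfl | rfl
      · rfl
      · rw [f3_zero] at hsuf
        exact absurd (last_eq_of_suffix hsuf) (by decide)
      · rw [f3_one] at hsuf
        have h' : (u₃ ++ [(0 : Fin 2)]) <:+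
            ((s₀.flatMap f3 ++ [0, 0, 1, 0, 1]) ++ [(1 : Fin 2)]) := by
          simpa [List.append_assoc] using hsuf
        exact absurd (last_eq_of_suffix h') (by decide)
      · rfl
    subst hac
    exact ⟨s₀, rfl⟩

lemma minsuf_peel {u₄ : List (Fin 2)} {b : Fin 2} {s₀ : List (Fin 2)}
    (h : MinSuf (u₄ ++ f3 b) (s₀.flatMap f3 ++ f3 b)) : MinSuf u₄ (s₀.flatMap f3) := by
  obtain ⟨_, hsuf, hmin⟩ := h
  refine ⟨⟨s₀, rfl⟩, suffix_append_cancel hsuf, ?_⟩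
  rintro v' hs hne ⟨s', rfl⟩ hu
  refine hmin (s'.flatMap f3 ++ f3 b) (suffix_append_right _ hs) ?_
    ⟨s' ++ [b], (bind_concat s' b).symm⟩ (suffix_append_right _ hu)
  intro heq
  exact hne (List.append_cancel_right heq)

lemma minsuf_unique : ∀ (n : ℕ) (u v₁ v₂ : List (Fin 2)), u.length ≤ n →
    MinSuf u v₁ → MinSuf u v₂ → v₁ = v₂ := by
  intro n
  induction n with
  | zero =>
    intro u v₁ v₂ hl h₁ h₂
    have hu : u = [] := List.length_eq_zero_iff.mp (Nat.le_zero.mp hl)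
    subst hu
    rw [minsuf_nil h₁, minsuf_nil h₂]
  | succ n ih =>
    intro u v₁ v₂ hl h₁ h₂
    rcases List.eq_nil_or_concat u with rfl | ⟨u₃, c, rfl⟩
    · rw [minsuf_nil h₁, minsuf_nil h₂]
    · rw [List.concat_eq_append] at h₁ h₂ hl
      obtain ⟨s₁, hv₁⟩ := minsuf_last h₁
      obtain ⟨s₂, hv₂⟩ := minsuf_last h₂
      subst hv₁; subst hv₂
      rcases fin2 c with rfl | rfl
      · -- last letter 0
        have h₁' : MinSuf (u₃ ++ f3 0) (s₁.flatMap f3 ++ f3 0) := h₁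
        have h₂' : MinSuf (u₃ ++ f3 0) (s₂.flatMap f3 ++ f3 0) := h₂
        have := ih u₃ _ _ (by simp at hl ⊢; omega) (minsuf_peel h₁') (minsuf_peel h₂')
        rw [this]
      · -- last letter 1
        by_cases h6 : u₃.length + 1 ≤ 6
        · -- short case : v = f3 1
          have e : ∀ s : List (Fin 2), MinSuf (u₃ ++ [1]) (s.flatMap f3 ++ f3 1) →
              s.flatMap f3 ++ f3 1 = f3 1 := by
            intro s hs
            have hF : f3 1 <:+ s.flatMap f3 ++ f3 1 := ⟨_, rfl⟩
            have husuf : u₃ ++ [1] <:+ f3 1 :=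
              List.suffix_of_suffix_length_le hs.2.1 hF (by simp [f3_one]; omega)
            by_contra hne
            exact hs.2.2 (f3 1) hF (fun hh => hne hh.symm) ⟨[1], by simp [bind_cons, bind_nil]⟩ husuf
          rw [e s₁ h₁, e s₂ h₂]
        · -- long case : peel off a full block f3 1
          have hF : f3 1 <:+ u₃ ++ [1] :=
            List.suffix_of_suffix_length_le ⟨_, rfl⟩ h₁.2.1 (by simp [f3_one]; omega)
          obtain ⟨u₄, hu4⟩ := hF
          rw [← hu4] at h₁ h₂
          have hlen : u₄.length ≤ n := by
            have h5 := congrArg List.length hu4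
            simp [f3_one] at h5 hl
            omega
          have := ih u₄ _ _ hlen (minsuf_peel h₁) (minsuf_peel h₂)
          rw [this]

/-- Decomposition of a prefix of an `f3`-image. -/
lemma pref_decomp : ∀ (s P : List (Fin 2)), P <+: s.flatMap f3 →
    ∃ s₁ s₂ p, s = s₁ ++ s₂ ∧ P = s₁.flatMap f3 ++ p ∧
      (p = [] ∨ ∃ b s₃, s₂ = b :: s₃ ∧ p ≠ [] ∧ p <+: f3 b ∧ p ≠ f3 b) := by
  intro s
  induction s with
  | nil =>
    intro P h
    have : P = [] := List.prefix_nil.mp (by simpa [bind_nil] using h)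
    exact ⟨[], [], [], rfl, by simp [this, bind_nil], Or.inl rfl⟩
  | cons a s' ih =>
    intro P h
    rw [bind_cons] at h
    rcases le_or_gt P.length (f3 a).length with hle | hlt
    · have hPa : P <+: f3 a :=
        List.prefix_of_prefix_length_le h (List.prefix_append _ _) hle
      by_cases hPe : P = f3 a
      · exact ⟨[a], s', [], rfl, by simp [hPe, bind_cons, bind_nil], Or.inl rfl⟩
      · rcases eq_or_ne P [] with rfl | hne
        · exact ⟨[], a :: s', [], rfl, by simp [bind_nil], Or.inl rfl⟩
        · exact ⟨[], a :: s', P, rfl, by simp [bind_nil],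
            Or.inr ⟨a, s', rfl, hne, hPa, hPe⟩⟩
    · have hfa : f3 a <+: P :=
        List.prefix_of_prefix_length_le (List.prefix_append _ _) h (le_of_lt hlt)
      obtain ⟨P', rfl⟩ := hfa
      have hP' : P' <+: s'.flatMap f3 := by
        obtain ⟨t, ht⟩ := h
        rw [List.append_assoc] at ht
        exact ⟨t, List.append_cancel_left ht⟩
      obtain ⟨s₁, s₂, p, rfl, hpeq, hc⟩ := ih P' hP'
      exact ⟨a :: s₁, s₂, p, rfl, by rw [bind_cons, hpeq, List.append_assoc], hc⟩

lemma tmPrefix_of_prefix {s : List (Fin 2)} {n : ℕ} (h : s <+: tmPrefix n) :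
    s = tmPrefix s.length := by
  have hlen : s.length ≤ n := by
    have := h.length_le
    simpa [tmPrefix] using this
  conv_lhs => rw [List.prefix_iff_eq_take.mp h]
  unfold tmPrefix
  rw [← List.map_take, List.take_range, min_eq_left hlen]

/-- Alignment: a factor of `w3` ending in `11` is a suffix of some `f3`-image of a
prefix of `tm`. -/
lemma aligned (u : List (Fin 2)) (hu : ∃ n, u <:+: (tmPrefix n).flatMap f3)
    (hsuf : [1, 1] <:+ u) : ∃ m, u <:+ (tmPrefix m).flatMap f3 := by
  obtain ⟨n, s, t, hst⟩ := hu
  have hP : (s ++ u) <+: (tmPrefix n).flatMap f3 := ⟨t, hst⟩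
  have huP : u <:+ s ++ u := ⟨s, rfl⟩
  obtain ⟨s₁, s₂, p, hsplit, hPeq, hc⟩ := pref_decomp _ _ hP
  rcases hc with rfl | ⟨b, s₃, hs₂, hpne, hppre, hpneq⟩
  · refine ⟨s₁.length, ?_⟩
    have hs₁ : s₁ = tmPrefix s₁.length := tmPrefix_of_prefix ⟨s₂, hsplit.symm⟩
    rw [← hs₁]
    have : s ++ u = s₁.flatMap f3 := by simpa using hPeq
    exact this ▸ huP
  · exfalso
    have h11 : [1, 1] <:+ s₁.flatMap f3 ++ p := hPeq ▸ hsuf.trans huP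
    have hp' : p <:+ s₁.flatMap f3 ++ p := ⟨_, rfl⟩
    have hpe : p = (f3 b).take p.length := List.prefix_iff_eq_take.mp hppre
    rcases fin2 b with rfl | rfl
    · -- b = 0: impossible to be a proper nonempty prefix of [0]
      have hl : p.length ≤ 1 := by simpa [f3_zero] using hppre.length_le
      have h1 : 1 ≤ p.length := List.length_pos_iff.mpr hpne
      have : p.length = 1 := by omega
      rw [this] at hpe
      rw [f3_zero] at hpe hpneq
      simp at hpe
      exact hpneq hpe
    · have hl : p.length ≤ 6 := by simpa [f3_one] using hppre.length_le
      have h1 : 1 ≤ p.length := List.length_pos_iff.mpr hpne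
      have hlt : p.length < 6 := by
        rcases lt_or_eq_of_le hl with h | h
        · exact h
        · rw [h] at hpe; rw [f3_one] at hpe
          simp at hpe
          rw [f3_one] at hpneq
          exact absurd hpe hpneq
      have hcase : p.length = 1 ∨ p.length = 2 ∨ p.length = 3 ∨ p.length = 4 ∨
          p.length = 5 := by omega
      rw [f3_one] at hpe
      rcases hcase with h | h | h | h | h <;> rw [h] at hpe <;>
        simp only [List.take] at hpe <;> subst hpe
      · exact absurd (List.suffix_of_suffix_length_le hp' h11 (by simp)) (by decide)
      · exact absurd (List.suffix_of_suffix_length_le h11 hp' (by simp)) (by decide)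
      · exact absurd (List.suffix_of_suffix_length_le h11 hp' (by simp)) (by decide)
      · exact absurd (List.suffix_of_suffix_length_le h11 hp' (by simp)) (by decide)
      · exact absurd (List.suffix_of_suffix_length_le h11 hp' (by simp)) (by decide)

/-- Every factor of `w3 = f3(t)` ending in `11` has a unique left completion. -/
theorem stmt15 (u : List (Fin 2)) (hu : ∃ n, u <:+: (tmPrefix n).flatMap f3)
    (hsuf : [1, 1] <:+ u) :
    ∃! v : List (Fin 2), LeftCompletion u v := by
  obtain ⟨m, hm⟩ := aligned u hu hsuf
  have hune : u ≠ [] := by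
    rintro rfl
    simpa using hsuf.length_le
  have hP0 : u <:+ ((tmPrefix m).drop 0).flatMap f3 := by simpa using hm
  obtain ⟨k₀, hk, hmax⟩ : ∃ k₀, (u <:+ ((tmPrefix m).drop k₀).flatMap f3) ∧
      ∀ j, k₀ < j → ¬ u <:+ ((tmPrefix m).drop j).flatMap f3 := by
    refine ⟨Nat.findGreatest (fun k => u <:+ ((tmPrefix m).drop k).flatMap f3) m,
      Nat.findGreatest_spec (P := fun k => u <:+ ((tmPrefix m).drop k).flatMap f3)
        (Nat.zero_le m) hP0, ?_⟩
    intro j hj hcon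
    rcases le_or_gt j m with hle | hgt
    · exact Nat.findGreatest_is_greatest
        (P := fun k => u <:+ ((tmPrefix m).drop k).flatMap f3) hj hle hcon
    · have hnil : (tmPrefix m).drop j = [] :=
        List.drop_eq_nil_of_le (by simp [tmPrefix]; omega)
      rw [hnil, bind_nil] at hcon
      exact hune (List.suffix_nil.mp hcon)
  have hLC : LeftCompletion u (((tmPrefix m).drop k₀).flatMap f3) := by
    refine ⟨⟨(tmPrefix m).drop k₀, ⟨k₀, ?_⟩, rfl⟩, hk, ?_⟩
    · apply List.ext_getElem
      · simp
      · intro i h1 h2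
        simp [tmPrefix]
    · rintro v' hs hne ⟨s', rfl⟩ hv'u
      obtain ⟨j, hj⟩ := suffix_image _ _ hs
      rw [List.drop_drop] at hj
      have hj0 : j ≠ 0 := fun hh => hne (by simpa [hh] using hj)
      exact hmax (k₀ + j) (by omega) (hj ▸ hv'u)
  refine ⟨_, hLC, ?_⟩
  intro y hy
  exact minsuf_unique u.length u y _ le_rfl (lc_minsuf hy) (lc_minsuf hLC)
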